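/- Recovery of a primal optimal solution from the homogeneous embedding: let P be a symmetric positive semidefinite n×n real matrix, A ∈ ℝᵐˣⁿ, q ∈ ℝⁿ, b ∈ ℝᵐ, and let K be a convex cone in ℝᵐ (closed under multiplication by positive scalars). Suppose x ∈ ℝⁿ, z, s ∈ ℝᵐ, τ > 0, κ ≥ 0 satisfy (1/τ)xᵀPx + qᵀx + bᵀz = −κ, Px + Aᵀz + qτ = 0, Ax + s − bτ = 0, s ∈ K, z ∈ K*, and ⟨s, z⟩ + τκ = 0. Then (x/τ, s/τ) is an optimal solution of the primal problem: A(x/τ) + s/τ = b, s/τ ∈ K, and for every x' ∈ ℝⁿ, s' ∈ ℝᵐ with Ax' + s' = b and s' ∈ K, one has ½ (x/τ)ᵀP(x/τ) + qᵀ(x/τ) ≤ ½ x'ᵀPx' + qᵀx'. -/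

import Mathlib

open Matrix

/-- Recovery of a primal optimal solution from the homogeneous embedding. -/
theorem primal_recovery {n m : ℕ}
    (P : Matrix (Fin n) (Fin n) ℝ) (hP : P.PosSemidef)
    (A : Matrix (Fin m) (Fin n) ℝ) (q : Fin n → ℝ) (b : Fin m → ℝ)
    (K : Set (Fin m → ℝ)) (hKconv : Convex ℝ K)
    (hKcone : ∀ c : ℝ, 0 < c → ∀ v ∈ K, c • v ∈ K)
    (x : Fin n → ℝ) (z s : Fin m → ℝ) (τ κ : ℝ)
    (hτ : 0 < τ) (hκ : 0 ≤ κ)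
    (h1 : (1/τ) * (x ⬝ᵥ (P *ᵥ x)) + q ⬝ᵥ x + b ⬝ᵥ z = -κ)
    (h2 : P *ᵥ x + Aᵀ *ᵥ z + τ • q = 0)
    (h3 : A *ᵥ x + s - τ • b = 0)
    (hs : s ∈ K) (hz : ∀ s' ∈ K, 0 ≤ z ⬝ᵥ s')
    (hcomp : s ⬝ᵥ z + τ * κ = 0) :
    A *ᵥ (τ⁻¹ • x) + τ⁻¹ • s = b ∧ τ⁻¹ • s ∈ K ∧
      ∀ (x' : Fin n → ℝ) (s' : Fin m → ℝ), A *ᵥ x' + s' = b → s' ∈ K →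
        (1/2) * ((τ⁻¹ • x) ⬝ᵥ (P *ᵥ (τ⁻¹ • x))) + q ⬝ᵥ (τ⁻¹ • x) ≤
          (1/2) * (x' ⬝ᵥ (P *ᵥ x')) + q ⬝ᵥ x' := by
  have hτ' : τ ≠ 0 := ne_of_gt hτ
  have h3' : A *ᵥ x + s = τ • b := by
    have := h3; linear_combination (norm := module) h3
  have hfeas : A *ᵥ (τ⁻¹ • x) + τ⁻¹ • s = b := by
    rw [mulVec_smul, ← smul_add, h3', smul_smul, inv_mul_cancel₀ hτ', one_smul]
  refine ⟨hfeas, hKcone τ⁻¹ (by positivity) s hs, ?_⟩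
  -- symmetry of P
  have hPsym : ∀ u v : Fin n → ℝ, u ⬝ᵥ (P *ᵥ v) = v ⬝ᵥ (P *ᵥ u) := by
    intro u v
    rw [dotProduct_mulVec, ← mulVec_transpose, dotProduct_comm]
    congr 1
    rw [show Pᵀ = P from hP.1]
  -- complementarity : s ⬝ᵥ z = 0
  have hsz : s ⬝ᵥ z = 0 := by
    have h0 := hz s hs
    rw [dotProduct_comm] at h0
    nlinarith [mul_nonneg hτ.le hκ]
  -- dual equation dotted with any vector
  have h2d : ∀ v : Fin n → ℝ, v ⬝ᵥ (P *ᵥ x) + z ⬝ᵥ (A *ᵥ v) + τ * (q ⬝ᵥ v) = 0 := by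
    intro v
    have := congrArg (fun w => v ⬝ᵥ w) h2
    simp only [dotProduct_add, dotProduct_smul, dotProduct_zero, smul_eq_mul] at this
    rw [show v ⬝ᵥ (Aᵀ *ᵥ z) = z ⬝ᵥ (A *ᵥ v) by
      rw [mulVec_transpose, dotProduct_comm, dotProduct_mulVec]] at this
    rw [dotProduct_comm q v]
    linarith [this]
  intro x' s' hfeas' hs'
  set d : Fin n → ℝ := x' - τ⁻¹ • x with hd
  have hx' : x' = τ⁻¹ • x + d := by simp [hd]
  have hdPd : 0 ≤ d ⬝ᵥ (P *ᵥ d) := by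
    have := hP.dotProduct_mulVec_nonneg d; rwa [star_trivial] at this
  -- z ⬝ᵥ (A *ᵥ d) = z ⬝ᵥ s̄ - z ⬝ᵥ s' = -(z ⬝ᵥ s')
  have hAd : z ⬝ᵥ (A *ᵥ d) = τ⁻¹ * (z ⬝ᵥ s) - z ⬝ᵥ s' := by
    have hAx' : A *ᵥ x' = b - s' := by
      linear_combination (norm := module) hfeas'
    have hAxb : A *ᵥ (τ⁻¹ • x) = b - τ⁻¹ • s := by
      linear_combination (norm := module) hfeas
    rw [hd, mulVec_sub, hAx', hAxb]
    simp [dotProduct_sub, dotProduct_smul, mul_comm]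
  have hzs : z ⬝ᵥ s = 0 := by rw [dotProduct_comm] at hsz; exact hsz
  have hzs' : 0 ≤ z ⬝ᵥ s' := hz s' hs'
  -- stationarity scaled: d ⬝ᵥ (P *ᵥ (τ⁻¹ • x)) + q ⬝ᵥ d = τ⁻¹ * (z ⬝ᵥ s')
  have hstat : d ⬝ᵥ (P *ᵥ (τ⁻¹ • x)) + q ⬝ᵥ d = τ⁻¹ * (z ⬝ᵥ s') := by
    have := h2d d
    rw [hAd, hzs] at this
    have hsmul : d ⬝ᵥ (P *ᵥ (τ⁻¹ • x)) = τ⁻¹ * (d ⬝ᵥ (P *ᵥ x)) := by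
      rw [mulVec_smul]; simp [dotProduct_smul]
    rw [hsmul]
    have hq : q ⬝ᵥ d = d ⬝ᵥ q := dotProduct_comm q d
    field_simp at this ⊢
    nlinarith [this, hq]
  -- expand objective at x' = x̄ + d
  rw [hx']
  simp only [mulVec_add, dotProduct_add, add_dotProduct]
  have h1' : (τ⁻¹ • x) ⬝ᵥ (P *ᵥ d) = d ⬝ᵥ (P *ᵥ (τ⁻¹ • x)) := hPsym _ _
  have hq' : 0 ≤ τ⁻¹ * (z ⬝ᵥ s') := by positivity
  nlinarith [hstat, hdPd, h1']
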